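/- Quasi-periodicity of the SAFT Zak transform: let f : ℝ → ℂ and t ∈ ℝ be such that Σ_{k∈ℤ} |f(t + k)| < ∞. Then for every ω ∈ ℝ, Z_A f(t, ω + Δ) = exp((Complex.I·Δ/(2b)) · (d·Δ + 2·d·ω + Ω)) · Z_A f(t, ω); in particular |Z_A f(t, ω + Δ)| = |Z_A f(t, ω)|. -/

import Mathlib

open MeasureTheory Real

/-- The SAFT Zak transform of `f : ℝ → ℂ`, with `Ω = 2*(b*q - d*p)`. -/
noncomputable def saftZak (a b d p q : ℝ) (f : ℝ → ℂ) (t ω : ℝ) : ℂ :=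
  (Real.sqrt (2 * π * b) : ℂ)⁻¹ *
    ∑' k : ℤ, f (t + (k : ℝ)) * Complex.exp (Complex.I / (2 * b) *
      ((d * ω ^ 2 + a * (k : ℝ) ^ 2 - 2 * (k : ℝ) * ω + 2 * (b * q - d * p) * ω
        + 2 * p * (k : ℝ) : ℝ) : ℂ))

/-- Quasi-periodicity of the SAFT Zak transform in `ω`, with `Δ = 2πb`. -/
theorem saftZak_quasi_periodic (a b c d p q : ℝ) (hb : 0 < b) (habcd : a * d - b * c = 1)
    (f : ℝ → ℂ) (t : ℝ) (hf : Summable fun k : ℤ => ‖f (t + (k : ℝ))‖) :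
    ∀ ω : ℝ,
      saftZak a b d p q f t (ω + 2 * π * b) =
        Complex.exp (Complex.I * ((2 * π * b : ℝ) : ℂ) / (2 * b) *
          ((d * (2 * π * b) + 2 * d * ω + 2 * (b * q - d * p) : ℝ) : ℂ)) *
          saftZak a b d p q f t ω ∧
      ‖saftZak a b d p q f t (ω + 2 * π * b)‖ = ‖saftZak a b d p q f t ω‖ := by
  intro ω
  have hb' : (b : ℂ) ≠ 0 := by exact_mod_cast hb.ne'
  set C := Complex.exp (Complex.I * ((2 * π * b : ℝ) : ℂ) / (2 * b) *
      ((d * (2 * π * b) + 2 * d * ω + 2 * (b * q - d * p) : ℝ) : ℂ)) with hC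
  have key : saftZak a b d p q f t (ω + 2 * π * b) = C * saftZak a b d p q f t ω := by
    have hterm : ∀ k : ℤ, f (t + (k : ℝ)) * Complex.exp (Complex.I / (2 * b) *
        ((d * (ω + 2 * π * b) ^ 2 + a * (k : ℝ) ^ 2 - 2 * (k : ℝ) * (ω + 2 * π * b)
          + 2 * (b * q - d * p) * (ω + 2 * π * b) + 2 * p * (k : ℝ) : ℝ) : ℂ)) =
        C * (f (t + (k : ℝ)) * Complex.exp (Complex.I / (2 * b) *
        ((d * ω ^ 2 + a * (k : ℝ) ^ 2 - 2 * (k : ℝ) * ω + 2 * (b * q - d * p) * ω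
          + 2 * p * (k : ℝ) : ℝ) : ℂ))) := by
      intro k
      rw [show ∀ x y : ℂ, C * (x * y) = x * (C * y) from fun x y => by ring]
      congr 1
      rw [hC, ← Complex.exp_add]
      have : Complex.I / (2 * b) *
          ((d * (ω + 2 * π * b) ^ 2 + a * (k : ℝ) ^ 2 - 2 * (k : ℝ) * (ω + 2 * π * b)
            + 2 * (b * q - d * p) * (ω + 2 * π * b) + 2 * p * (k : ℝ) : ℝ) : ℂ) =
          (Complex.I * ((2 * π * b : ℝ) : ℂ) / (2 * b) *
            ((d * (2 * π * b) + 2 * d * ω + 2 * (b * q - d * p) : ℝ) : ℂ) +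
           Complex.I / (2 * b) *
            ((d * ω ^ 2 + a * (k : ℝ) ^ 2 - 2 * (k : ℝ) * ω + 2 * (b * q - d * p) * ω
              + 2 * p * (k : ℝ) : ℝ) : ℂ)) +
          (-k : ℤ) * (2 * π * Complex.I) := by
        push_cast
        field_simp
        ring
      rw [this, Complex.exp_add, Complex.exp_int_mul_two_pi_mul_I, mul_one]
    unfold saftZak
    rw [tsum_congr hterm, tsum_mul_left]
    ring
  refine ⟨key, ?_⟩
  rw [key, norm_mul]
  have hCnorm : ‖C‖ = 1 := by
    have : C = Complex.exp (((2 * π * b / (2 * b) *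
        (d * (2 * π * b) + 2 * d * ω + 2 * (b * q - d * p)) : ℝ) : ℂ) * Complex.I) := by
      rw [hC]
      congr 1
      push_cast
      ring
    rw [this, Complex.norm_exp_ofReal_mul_I]
  rw [hCnorm, one_mul]
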